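/- Let λ ≠ 0 be real and let x, x', g ∈ ℝⁿ satisfy 1 − λ⟨x', g⟩ > 0 and 1 + λ⟨g, x − x'⟩ > 0. Define u' = g / (1 − λ⟨x', g⟩). Then 1 + λ⟨x, u'⟩ > 0, 1 + λ⟨x', u'⟩ > 0, and κ_λ(⟨g, x − x'⟩) = κ_λ(⟨x, u'⟩) − κ_λ(⟨x', u'⟩). Consequently, for a function ψ : Ω → ℝ differentiable at x' with gradient g = ∇ψ(x'), the λ-divergence D_{λ,ψ}(x,x') = ψ(x) − ψ(x') − κ_λ(⟨∇ψ(x'), x − x'⟩) also equals ψ(x) − ψ(x') − κ_λ(⟨x, u'⟩) + κ_λ(⟨x', u'⟩), where u' = ∇ψ(x')/(1 − λ⟨x', ∇ψ(x')⟩) is the λ-deformed gradient D^λψ(x'). -/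

import Mathlib

open scoped RealInnerProductSpace

/-- The deformed logarithm `κ_λ(t) = (1/λ) log(1 + λ t)`. -/
noncomputable def kappaFn (lam t : ℝ) : ℝ := (1 / lam) * Real.log (1 + lam * t)

/-- **The two expressions for the λ-divergence agree.**
For `λ ≠ 0` and `x, x', g` with `1 − λ⟨x',g⟩ > 0` and `1 + λ⟨g, x−x'⟩ > 0`, setting
`u' = g / (1 − λ⟨x',g⟩)` (the λ-deformed gradient when `g = ∇ψ(x')`), one has
`1 + λ⟨x,u'⟩ > 0`, `1 + λ⟨x',u'⟩ > 0`, and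
`κ_λ(⟨g, x−x'⟩) = κ_λ(⟨x,u'⟩) − κ_λ(⟨x',u'⟩)`; consequently
`D_{λ,ψ}(x,x') = ψ(x) − ψ(x') − κ_λ(⟨x,u'⟩) + κ_λ(⟨x',u'⟩)` for any `ψ` differentiable
at `x'` with gradient `g`. -/
theorem lambda_divergence_two_expressions {n : ℕ} (lam : ℝ) (hlam : lam ≠ 0)
    (x x' g : EuclideanSpace ℝ (Fin n))
    (h1 : 0 < 1 - lam * ⟪x', g⟫)
    (h2 : 0 < 1 + lam * ⟪g, x - x'⟫)
    (u' : EuclideanSpace ℝ (Fin n))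
    (hu' : u' = (1 - lam * ⟪x', g⟫)⁻¹ • g) :
    0 < 1 + lam * ⟪x, u'⟫ ∧
    0 < 1 + lam * ⟪x', u'⟫ ∧
    kappaFn lam ⟪g, x - x'⟫ = kappaFn lam ⟪x, u'⟫ - kappaFn lam ⟪x', u'⟫ ∧
    (∀ ψ : EuclideanSpace ℝ (Fin n) → ℝ, DifferentiableAt ℝ ψ x' → gradient ψ x' = g →
      ψ x - ψ x' - kappaFn lam ⟪gradient ψ x', x - x'⟫
        = ψ x - ψ x' - kappaFn lam ⟪x, u'⟫ + kappaFn lam ⟪x', u'⟫) := by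
  have ha : (1 - lam * ⟪x', g⟫) ≠ 0 := ne_of_gt h1
  have hxu : ⟪x, u'⟫ = (1 - lam * ⟪x', g⟫)⁻¹ * ⟪x, g⟫ := by
    rw [hu', real_inner_smul_right]
  have hxu' : ⟪x', u'⟫ = (1 - lam * ⟪x', g⟫)⁻¹ * ⟪x', g⟫ := by
    rw [hu', real_inner_smul_right]
  have hsub : ⟪g, x - x'⟫ = ⟪x, g⟫ - ⟪x', g⟫ := by
    rw [inner_sub_right, real_inner_comm g x, real_inner_comm g x']
  obtain ⟨s, hs⟩ : ∃ s : ℝ, ⟪x', g⟫ = s := ⟨_, rfl⟩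
  obtain ⟨t, ht⟩ : ∃ t : ℝ, ⟪x, g⟫ = t := ⟨_, rfl⟩
  rw [hs] at hxu hxu' ha h1
  rw [ht] at hxu
  rw [hs, ht] at hsub
  have e1 : 1 + lam * ⟪x, u'⟫ = (1 + lam * ⟪g, x - x'⟫) / (1 - lam * s) := by
    rw [hxu, hsub]; field_simp; ring
  have e2 : 1 + lam * ⟪x', u'⟫ = (1 - lam * s)⁻¹ := by
    rw [hxu']; field_simp; ring
  have p1 : 0 < 1 + lam * ⟪x, u'⟫ := by rw [e1]; exact div_pos h2 h1
  have p2 : 0 < 1 + lam * ⟪x', u'⟫ := by rw [e2]; exact inv_pos.mpr h1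
  have key : kappaFn lam ⟪g, x - x'⟫ = kappaFn lam ⟪x, u'⟫ - kappaFn lam ⟪x', u'⟫ := by
    unfold kappaFn
    rw [e1, e2, ← mul_sub, Real.log_div (ne_of_gt h2) ha,
      Real.log_inv]
    ring
  refine ⟨p1, p2, key, ?_⟩
  intro ψ _ hg
  rw [hg, key]; ring
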